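/- Let $\sigma \subset \mathbb{R}^3$ be the cone spanned by $v_1 = (1,0,0)$, $v_2 = (0,1,0)$, $v_3 = (1,1,2)$, with lattice $N = \mathbb{Z}^3$. Then the lattice point $v = (1,1,1)$ lies in $\sigma$, is a minimal element of $(\sigma \cap N) \setminus \{0\}$ for the order $v \le_\sigma v'$ iff $v' - v \in \sigma$, but does not lie on the union of compact faces of the convex hull $\Gamma(\sigma)$ of the nonzero lattice points of $\sigma$. -/

import Mathlib

/-- In the cone `σ ⊂ ℝ³` spanned by `(1,0,0)`, `(0,1,0)`, `(1,1,2)`, the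
lattice point `v = (1,1,1)` lies in `σ`, is minimal among nonzero lattice
points of `σ` for the order `≤_σ`, but does not lie on any compact face of the
convex hull `Γ(σ)` of the nonzero lattice points of `σ`: a Nash (minimal)
valuation which is not a terminal valuation. -/
theorem stmt_10
    (σ : Set (Fin 3 → ℝ))
    (hσ : σ = {x | ∃ a b c : ℝ, 0 ≤ a ∧ 0 ≤ b ∧ 0 ≤ c ∧
      x = a • (![1, 0, 0] : Fin 3 → ℝ) + b • ![0, 1, 0] + c • ![1, 1, 2]})
    (cast : (Fin 3 → ℤ) → (Fin 3 → ℝ))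
    (hcast : ∀ w i, cast w i = (w i : ℝ))
    (Γ : Set (Fin 3 → ℝ))
    (hΓ : Γ = convexHull ℝ (cast '' {w : Fin 3 → ℤ | cast w ∈ σ ∧ w ≠ 0})) :
    cast ![1, 1, 1] ∈ σ ∧
    (∀ w : Fin 3 → ℤ, cast w ∈ σ → w ≠ 0 →
      cast ![1, 1, 1] - cast w ∈ σ → w = ![1, 1, 1]) ∧
    ¬ ∃ F : Set (Fin 3 → ℝ), IsExtreme ℝ Γ F ∧ IsCompact F ∧ cast ![1, 1, 1] ∈ F := by
  -- characterization of σ by inequalities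
  have hσ' : ∀ x : Fin 3 → ℝ, x ∈ σ ↔ 0 ≤ x 2 ∧ x 2 ≤ 2 * x 0 ∧ x 2 ≤ 2 * x 1 := by
    intro x
    rw [hσ]
    constructor
    · rintro ⟨a, b, c, ha, hb, hc, hx⟩
      have h0 := congrFun hx 0
      have h1 := congrFun hx 1
      have h2 := congrFun hx 2
      simp [Matrix.cons_val_zero, Matrix.cons_val_one, Matrix.head_cons] at h0 h1 h2
      refine ⟨by linarith, by linarith, by linarith⟩
    · rintro ⟨h1, h2, h3⟩
      refine ⟨x 0 - x 2 / 2, x 1 - x 2 / 2, x 2 / 2, by linarith, by linarith, by linarith, ?_⟩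
      funext i
      fin_cases i <;>
        simp [Matrix.cons_val_zero, Matrix.cons_val_one, Matrix.head_cons] <;> ring
  have hcast3 : ∀ a b c : ℤ, cast ![a, b, c] = ![(a : ℝ), (b : ℝ), (c : ℝ)] := by
    intro a b c
    funext i
    fin_cases i <;> simp [hcast]
  -- membership of lattice points in σ
  have hmemσ : ∀ a b c : ℤ, 0 ≤ c → c ≤ 2 * a → c ≤ 2 * b → cast ![a, b, c] ∈ σ := by
    intro a b c h1 h2 h3
    rw [hσ', hcast3]
    refine ⟨?_, ?_, ?_⟩ <;> simp <;> [exact_mod_cast h1; exact_mod_cast h2; exact_mod_cast h3]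
  have hv : cast ![1, 1, 1] ∈ σ := hmemσ 1 1 1 (by norm_num) (by norm_num) (by norm_num)
  refine ⟨hv, ?_, ?_⟩
  · -- minimality
    intro w hw hw0 hsub
    rw [hσ'] at hw hsub
    have hc0 : cast ![(1:ℤ),1,1] = ![(1:ℝ),1,1] := by rw [hcast3]; norm_num
    have e0 : ∀ i, cast w i = (w i : ℝ) := hcast w
    -- turn the real inequalities into integer ones
    have A1 : (0:ℝ) ≤ (w 2 : ℝ) := by rw [← e0 2]; exact hw.1
    have A2 : (w 2 : ℝ) ≤ 2 * (w 0 : ℝ) := by rw [← e0 2, ← e0 0]; exact hw.2.1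
    have A3 : (w 2 : ℝ) ≤ 2 * (w 1 : ℝ) := by rw [← e0 2, ← e0 1]; exact hw.2.2
    have B1 : (0:ℝ) ≤ 1 - (w 2 : ℝ) := by
      have := hsub.1
      simpa [hc0, e0, Pi.sub_apply] using this
    have B2 : 1 - (w 2 : ℝ) ≤ 2 * (1 - (w 0 : ℝ)) := by
      have := hsub.2.1
      simpa [hc0, e0, Pi.sub_apply] using this
    have B3 : 1 - (w 2 : ℝ) ≤ 2 * (1 - (w 1 : ℝ)) := by
      have := hsub.2.2
      simpa [hc0, e0, Pi.sub_apply] using this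
    have a1 : 0 ≤ w 2 := by exact_mod_cast A1
    have a2 : w 2 ≤ 2 * w 0 := by exact_mod_cast A2
    have a3 : w 2 ≤ 2 * w 1 := by exact_mod_cast A3
    have b1 : 0 ≤ 1 - w 2 := by exact_mod_cast B1
    have b2 : 1 - w 2 ≤ 2 * (1 - w 0) := by exact_mod_cast B2
    have b3 : 1 - w 2 ≤ 2 * (1 - w 1) := by exact_mod_cast B3
    have hwne : ¬ (w 0 = 0 ∧ w 1 = 0 ∧ w 2 = 0) := by
      intro ⟨h0, h1, h2⟩
      apply hw0
      funext i
      fin_cases i <;> simpa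
    have : w 0 = 1 ∧ w 1 = 1 ∧ w 2 = 1 := by omega
    funext i
    fin_cases i <;> simp [this.1, this.2.1, this.2.2]
  · -- no compact extreme face contains v
    rintro ⟨F, hext, hcomp, hvF⟩
    -- lattice points in Γ
    have hmemΓ : ∀ a b c : ℤ, 0 ≤ c → c ≤ 2 * a → c ≤ 2 * b → ¬(a = 0 ∧ b = 0 ∧ c = 0) →
        cast ![a, b, c] ∈ Γ := by
      intro a b c h1 h2 h3 hne
      rw [hΓ]
      apply subset_convexHull
      exact ⟨![a, b, c], ⟨hmemσ a b c h1 h2 h3, by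
        intro h
        apply hne
        refine ⟨?_, ?_, ?_⟩ <;> [have := congrFun h 0; have := congrFun h 1; have := congrFun h 2]
          <;> simpa using this⟩, rfl⟩
    -- midpoint lemma
    have hmid : ∀ x y z : Fin 3 → ℝ, x = (1/2 : ℝ) • y + (1/2 : ℝ) • z →
        x ∈ openSegment ℝ y z :=
      fun x y z h => ⟨1/2, 1/2, by norm_num, by norm_num, by norm_num, h.symm⟩
    -- (1,1,0) and (1,1,2) are in F
    have key : cast ![1,1,0] ∈ F ∧ cast ![1,1,2] ∈ F := by
      refine (fun h => ⟨hext.2 (hmemΓ 1 1 0 (by norm_num) (by norm_num) (by norm_num) (by norm_num))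
        (hmemΓ 1 1 2 (by norm_num) (by norm_num) (by norm_num) (by norm_num)) hvF h,
        hext.2 (hmemΓ 1 1 2 (by norm_num) (by norm_num) (by norm_num) (by norm_num))
        (hmemΓ 1 1 0 (by norm_num) (by norm_num) (by norm_num) (by norm_num)) hvF
        (by rw [openSegment_symm]; exact h)⟩) ?_
      apply hmid
      rw [hcast3, hcast3, hcast3]
      funext i
      fin_cases i <;> norm_num
    -- the unbounded ray
    have ray : ∀ n : ℕ, cast ![(n : ℤ) + 1, 1, 0] ∈ F := by
      intro n
      induction n with
      | zero => simpa using key.1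
      | succ n ih =>
        have := (fun (h : cast ![(n:ℤ)+1, 1, 0] ∈ openSegment ℝ (cast ![(n:ℤ), 1, 0]) (cast ![(n:ℤ)+2, 1, 0])) => hext.2 (hmemΓ ((n:ℤ)+2) 1 0 (by norm_num) (by omega) (by norm_num) (by omega))
          (hmemΓ ((n:ℤ)) 1 0 (by norm_num) (by omega) (by norm_num) (by omega)) ih
          (by rw [openSegment_symm]; exact h)) ?_
        · have e : ((n + 1 : ℕ) : ℤ) + 1 = (n : ℤ) + 2 := by push_cast; ring
          rw [e]
          exact this
        · apply hmid
          rw [hcast3, hcast3, hcast3]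
          funext i
          fin_cases i <;> (push_cast; norm_num [Matrix.cons_val_two]; try ring)
    -- contradiction with compactness
    have hbdd := hcomp.isBounded
    obtain ⟨R, hR⟩ := hbdd.exists_norm_le
    obtain ⟨n, hn⟩ := exists_nat_gt R
    have h1 := hR _ (ray n)
    have h2 : (n : ℝ) + 1 ≤ ‖cast ![(n : ℤ) + 1, 1, 0]‖ := by
      have := norm_le_pi_norm (cast ![(n : ℤ) + 1, 1, 0]) 0
      rw [hcast3] at this ⊢
      simp only [Matrix.cons_val_zero] at this
      calc (n : ℝ) + 1 ≤ ‖((n : ℝ) + 1 : ℝ)‖ := by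
            rw [Real.norm_eq_abs]; exact le_abs_self _
        _ ≤ _ := by push_cast at this ⊢; exact this
    linarith
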